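/- Let F be a finite field and let C₁ ⊆ C₂ ⊆ (Fin N → F) be linear codes, each containing a nonzero vector, such that Δ(C₂) < Δ(C₁). Then the sum over all s ∈ C₂ \ C₁ of the cardinality of {c ∈ C₁ : hammingDist(s, c) ≤ Δ(C₂)} equals |C₁| · A_{Δ(C₂)}(C₂). -/

import Mathlib

/-- The minimum distance of a linear code `C`: the least Hamming weight of a
nonzero codeword of `C`. -/
noncomputable def minDist {N : ℕ} {F : Type*} [Field F] [Fintype F] [DecidableEq F]
    (C : Submodule F (Fin N → F)) : ℕ :=
  sInf {w : ℕ | ∃ c ∈ C, c ≠ 0 ∧ hammingNorm c = w}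

/-- `A_w(C)`: the number of codewords of `C` of Hamming weight exactly `w`. -/
noncomputable def weightCount {N : ℕ} {F : Type*} [Field F] [Fintype F] [DecidableEq F]
    (C : Submodule F (Fin N → F)) (w : ℕ) : ℕ :=
  {c : Fin N → F | c ∈ C ∧ hammingNorm c = w}.ncard

/-- the total count, over centers `s ∈ C₂ \ C₁`, of codewords of `C₁`
within distance `Δ(C₂)` of `s` equals `|C₁| · A_{Δ(C₂)}(C₂)`. -/
theorem stmt_2 {N : ℕ} {F : Type*} [Field F] [Fintype F] [DecidableEq F]
    (C₁ C₂ : Submodule F (Fin N → F)) (hsub : C₁ ≤ C₂)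
    (h1 : ∃ c ∈ C₁, c ≠ 0) (h2 : ∃ c ∈ C₂, c ≠ 0)
    (hΔ : minDist C₂ < minDist C₁) :
    ∑ᶠ s ∈ ((C₂ : Set (Fin N → F)) \ (C₁ : Set (Fin N → F))),
        {c : Fin N → F | c ∈ C₁ ∧ hammingDist s c ≤ minDist C₂}.ncard
      = Nat.card C₁ * weightCount C₂ (minDist C₂) := by
  classical
  set d := minDist C₂ with hd
  have hmem : d ∈ {w : ℕ | ∃ c ∈ C₂, c ≠ 0 ∧ hammingNorm c = w} := by
    apply Nat.sInf_mem
    obtain ⟨c, hc, hc0⟩ := h2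
    exact ⟨hammingNorm c, c, hc, hc0, rfl⟩
  obtain ⟨c₀, hc₀, hc₀0, hc₀w⟩ := hmem
  have hd_pos : 0 < d := by
    rw [← hc₀w]
    exact Nat.pos_of_ne_zero (fun h => hc₀0 (by simpa [hammingNorm_eq_zero] using h))
  have hle2 : ∀ c ∈ C₂, c ≠ 0 → d ≤ hammingNorm c := fun c hc h0 =>
    Nat.sInf_le ⟨c, hc, h0, rfl⟩
  have hle1 : ∀ c ∈ C₁, c ≠ 0 → minDist C₁ ≤ hammingNorm c := fun c hc h0 =>
    Nat.sInf_le ⟨c, hc, h0, rfl⟩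
  have hnot1 : ∀ c ∈ C₂, hammingNorm c = d → c ∉ C₁ := by
    intro c _ hw hc1
    have h0 : c ≠ 0 := fun h => by rw [h, hammingNorm_zero] at hw; omega
    have := hle1 c hc1 h0
    omega
  -- Finsets
  set S : Finset (Fin N → F) := Finset.univ.filter (fun s => s ∈ C₂ ∧ s ∉ C₁) with hS
  set T : (Fin N → F) → Finset (Fin N → F) :=
    fun s => Finset.univ.filter (fun c => c ∈ C₁ ∧ hammingDist s c ≤ d) with hT
  set W : Finset (Fin N → F) := Finset.univ.filter (fun c => c ∈ C₂ ∧ hammingNorm c = d) with hW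
  set K : Finset (Fin N → F) := Finset.univ.filter (fun c => c ∈ C₁) with hK
  have hsetS : ((C₂ : Set (Fin N → F)) \ (C₁ : Set (Fin N → F))) = ↑S := by
    ext x; simp [hS]
  have hsum : ∑ᶠ s ∈ ((C₂ : Set (Fin N → F)) \ (C₁ : Set (Fin N → F))),
      {c : Fin N → F | c ∈ C₁ ∧ hammingDist s c ≤ d}.ncard
      = ∑ s ∈ S, (T s).card := by
    rw [hsetS, finsum_mem_coe_finset]
    refine Finset.sum_congr rfl fun s _ => ?_
    rw [show {c : Fin N → F | c ∈ C₁ ∧ hammingDist s c ≤ d} = ↑(T s) from by ext x; simp [hT],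
      Set.ncard_coe_finset]
  have hK' : Nat.card C₁ = K.card := by
    have hKs : ((C₁ : Set (Fin N → F))) = ↑K := by ext x; simp [hK]
    rw [show Nat.card C₁ = ((C₁ : Set (Fin N → F))).ncard from Nat.card_coe_set_eq _,
      hKs, Set.ncard_coe_finset]
  have hW' : weightCount C₂ d = W.card := by
    rw [weightCount, show {c : Fin N → F | c ∈ C₂ ∧ hammingNorm c = d} = ↑W from by
      ext x; simp [hW], Set.ncard_coe_finset]
  rw [hsum, hK', hW', ← Finset.card_sigma, ← Finset.card_product]
  apply Finset.card_bij (fun a _ => (a.2, a.1 - a.2))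
  · rintro ⟨s, c⟩ ha
    simp only [Finset.mem_sigma, hS, hT, Finset.mem_filter, Finset.mem_univ, true_and] at ha
    obtain ⟨⟨hs2, hs1⟩, hc1, hdist⟩ := ha
    have hsc2 : s - c ∈ C₂ := C₂.sub_mem hs2 (hsub hc1)
    have hsc0 : s - c ≠ 0 := fun h => hs1 (by
      have : s = c := sub_eq_zero.mp h
      rw [this]; exact hc1)
    have heq : hammingNorm (s - c) = d := by
      have h1 : hammingNorm (s - c) ≤ d := by
        rwa [hammingDist_comm, hammingDist_eq_hammingNorm, neg_add_eq_sub] at hdist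
      have h2 := hle2 _ hsc2 hsc0
      omega
    simp only [Finset.mem_product, hK, hW, Finset.mem_filter, Finset.mem_univ, true_and]
    exact ⟨hc1, hsc2, heq⟩
  · rintro ⟨s, c⟩ ha ⟨s', c'⟩ ha' h
    simp only [Prod.mk.injEq] at h
    obtain ⟨h1, h2⟩ := h
    subst h1
    have hs : s = s' := by
      have := congrArg (· + c) h2
      simpa [sub_add_cancel] using this
    subst hs; rfl
  · rintro ⟨c, w⟩ hcw
    simp only [Finset.mem_product, hK, hW, Finset.mem_filter, Finset.mem_univ, true_and] at hcw
    obtain ⟨hc1, hw2, hwd⟩ := hcw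
    refine ⟨⟨c + w, c⟩, ?_, ?_⟩
    · simp only [Finset.mem_sigma, hS, hT, Finset.mem_filter, Finset.mem_univ, true_and]
      refine ⟨⟨C₂.add_mem (hsub hc1) hw2, fun h => ?_⟩, hc1, ?_⟩
      · exact hnot1 w hw2 hwd (by simpa using C₁.sub_mem h hc1)
      · rw [hammingDist_comm, hammingDist_eq_hammingNorm]
        simp [hwd]
    · simp [add_sub_cancel_left]
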